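/- Let L be a compact connected linearly ordered topological space. Then the group Hom_p(L × {0,1}) of self-homeomorphisms of the disjoint union of two copies of L, endowed with the topology of pointwise convergence, is a topological group. -/

import Mathlib

open Set Topology

universe u

/-- A topological space is a LOTS if it is homeomorphic to a linear order with the order topology. -/
def IsLOTS (Y : Type u) [TopologicalSpace Y] : Prop :=
  ∃ (L : Type u) (lo : LinearOrder L) (ts : TopologicalSpace L),
    @OrderTopology L ts lo.toPartialOrder.toPreorder ∧ Nonempty (Y ≃ₜ L)

/-- The set of locally ordered points of `X`. -/
def LO (X : Type u) [TopologicalSpace X] : Set X :=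
  {x | ∃ U : Set X, IsOpen U ∧ x ∈ U ∧ IsLOTS ↥U}

/-- Orderly open sets. -/
def Orderly {X : Type u} [TopologicalSpace X] (U : Set X) : Prop :=
  IsOpen U ∧ U = interior (closure U) ∧ IsConnected U ∧
    (closure U \ U).Finite ∧ closure U \ U ⊆ LO X

/-- Topology of pointwise convergence on the homeomorphism group. -/
instance homPt (X : Type u) [TopologicalSpace X] : TopologicalSpace (X ≃ₜ X) :=
  TopologicalSpace.induced (fun f => (f : X → X)) Pi.topologicalSpace

open Filter

section Llevel
variable {L : Type u} [LinearOrder L] [TopologicalSpace L] [OrderTopology L]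
  [CompactSpace L] [ConnectedSpace L]

omit [CompactSpace L] in
theorem myDense : DenselyOrdered L := by
  constructor
  intro a b hab
  by_contra h
  push_neg at h
  have hclopen : IsClopen (Iio b) := by
    refine ⟨?_, isOpen_Iio⟩
    have : Ici b = Ioi a := by
      ext x
      constructor
      · intro hx; exact lt_of_lt_of_le hab hx
      · intro hx
        exact h x hx
    rw [← isOpen_compl_iff, compl_Iio, this]
    exact isOpen_Ioi
  rcases isClopen_iff.1 hclopen with h0 | h1
  · exact absurd (mem_Iio.2 hab) (h0 ▸ id)
  · have : b ∈ Iio b := h1 ▸ mem_univ b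
    exact lt_irrefl b this

theorem exists_isLUB_all (s : Set L) : ∃ x, IsLUB s x := by
  obtain ⟨bot, hbot⟩ := isCompact_univ.exists_isLeast (univ_nonempty (α := L))
  rcases s.eq_empty_or_nonempty with rfl | hne
  · exact ⟨bot, by simpa [IsLUB, upperBounds_empty] using hbot⟩
  · obtain ⟨top, htop⟩ := isCompact_univ.exists_isGreatest (univ_nonempty (α := L))
    have hclosed : IsClosed (upperBounds s) := by
      have : upperBounds s = ⋂ x ∈ s, Ici x := by
        ext y; simp [upperBounds, mem_iInter₂]
      rw [this]
      exact isClosed_biInter fun x _ => isClosed_Ici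
    have hcomp : IsCompact (upperBounds s) := hclosed.isCompact
    have hneU : (upperBounds s).Nonempty := ⟨top, fun x _ => htop.2 (mem_univ x)⟩
    obtain ⟨u, hu⟩ := hcomp.exists_isLeast hneU
    exact ⟨u, hu⟩

theorem mono_or_anti (f : L ≃ₜ L) : StrictMono f ∨ StrictAnti f := by
  obtain ⟨bot, hbot⟩ := isCompact_univ.exists_isLeast (univ_nonempty (α := L))
  obtain ⟨top, htop⟩ := isCompact_univ.exists_isGreatest (univ_nonempty (α := L))
  letI : SupSet L := ⟨fun s => (exists_isLUB_all s).choose⟩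
  have hlub : ∀ s : Set L, IsLUB s (sSup s) := fun s => (exists_isLUB_all s).choose_spec
  letI ccl : ConditionallyCompleteLinearOrder L :=
    { conditionallyCompleteLatticeOfLatticeOfsSup L (fun s _ _ => hlub s),
      (inferInstance : LinearOrder L) with
      csSup_of_not_bddAbove := fun s hs =>
        absurd ⟨top, fun x _ => htop.2 (mem_univ x)⟩ hs
      csInf_of_not_bddBelow := fun s hs =>
        absurd ⟨bot, fun x _ => hbot.2 (mem_univ x)⟩ hs }
  letI : BoundedOrder L :=
    { top := top, le_top := fun x => htop.2 (mem_univ x),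
      bot := bot, bot_le := fun x => hbot.2 (mem_univ x) }
  haveI hD : DenselyOrdered L := myDense
  haveI hOT : OrderTopology L := ‹_›
  exact f.continuous.strictMono_of_inj_boundedOrder' f.injective

/-- monotone homeomorphisms map extremes to extremes -/
theorem extreme_map (g : L ≃ₜ L) {x : L} (hx : IsBot x ∨ IsTop x) :
    IsBot (g x) ∨ IsTop (g x) := by
  rcases mono_or_anti g with m | m <;> rcases hx with hx | hx
  · exact Or.inl fun y => by
      have := m.monotone (hx (g.symm y)); rwa [g.apply_symm_apply] at this
  · exact Or.inr fun y => by
      have := m.monotone (hx (g.symm y)); rwa [g.apply_symm_apply] at this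
  · exact Or.inr fun y => by
      have := m.antitone (hx (g.symm y)); rwa [g.apply_symm_apply] at this
  · exact Or.inl fun y => by
      have := m.antitone (hx (g.symm y)); rwa [g.apply_symm_apply] at this

theorem symm_mem_Icc (g : L ≃ₜ L) {a b y : L} (hab : a ≤ b)
    (h : (g a < y ∧ y < g b) ∨ (g b < y ∧ y < g a)) : g.symm y ∈ Icc a b := by
  rcases mono_or_anti g with m | m <;> rcases h with ⟨h1, h2⟩ | ⟨h1, h2⟩
  · constructor
    · exact m.le_iff_le.1 (by rw [g.apply_symm_apply]; exact h1.le)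
    · exact m.le_iff_le.1 (by rw [g.apply_symm_apply]; exact h2.le)
  · exact absurd ((m.monotone hab).trans_lt h1) (not_lt.2 h2.le)
  · exact absurd ((m.antitone hab).trans_lt' h2) (not_lt.2 h1.le)
  · constructor
    · exact m.le_iff_ge.1 (by rw [g.apply_symm_apply]; exact h2.le)
    · exact m.le_iff_ge.1 (by rw [g.apply_symm_apply]; exact h1.le)

/-- Forward evaluation control lemma. -/
theorem fwd_lemma (g₀ : L ≃ₜ L) (x₀ : L) (V : Set L) (hV : IsOpen V) (hmem : g₀ x₀ ∈ V) :
    ∃ (a b : L) (W : Set L), IsOpen W ∧ g₀ a ∈ W ∧ g₀ b ∈ W ∧ x₀ ∈ interior (Icc a b) ∧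
      ∀ g : L ≃ₜ L, g a ∈ W → g b ∈ W → ∀ x ∈ Icc a b, g x ∈ V := by
  obtain ⟨c, d, hcd, hnh, hsub⟩ := exists_Icc_mem_subset_of_mem_nhds (hV.mem_nhds hmem)
  set W := interior (Icc c d) with hW
  have hWopen : IsOpen W := isOpen_interior
  have hpre : g₀ ⁻¹' W ∈ 𝓝 x₀ := g₀.continuous.continuousAt.preimage_mem_nhds
    (hWopen.mem_nhds (mem_interior_iff_mem_nhds.2 hnh))
  obtain ⟨a, b, hab, hnh', hsub'⟩ := exists_Icc_mem_subset_of_mem_nhds hpre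
  refine ⟨a, b, W, hWopen, hsub' ⟨le_refl a, hab.1.trans hab.2⟩,
    hsub' ⟨hab.1.trans hab.2, le_refl b⟩, mem_interior_iff_mem_nhds.2 hnh', ?_⟩
  intro g hga hgb x hx
  have hga' : g a ∈ Icc c d := interior_subset hga
  have hgb' : g b ∈ Icc c d := interior_subset hgb
  apply hsub
  rcases mono_or_anti g with m | m
  · exact ⟨hga'.1.trans (m.monotone hx.1), (m.monotone hx.2).trans hgb'.2⟩
  · exact ⟨hgb'.1.trans (m.antitone hx.2), (m.antitone hx.1).trans hga'.2⟩

/-- Inverse control lemma. -/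
theorem inv_lemma (g₀ : L ≃ₜ L) (y : L) (V : Set L) (hV : IsOpen V) (hmem : g₀.symm y ∈ V) :
    ∃ (a b : L) (Wa Wb : Set L), IsOpen Wa ∧ IsOpen Wb ∧ g₀ a ∈ Wa ∧ g₀ b ∈ Wb ∧
      ∀ g : L ≃ₜ L, g a ∈ Wa → g b ∈ Wb → g.symm y ∈ V := by
  haveI hD : DenselyOrdered L := myDense
  obtain ⟨bot, hbot⟩ := isCompact_univ.exists_isLeast (univ_nonempty (α := L))
  obtain ⟨top, htop⟩ := isCompact_univ.exists_isGreatest (univ_nonempty (α := L))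
  set m₀ := g₀.symm y with hm₀
  have hg₀m₀ : g₀ m₀ = y := g₀.apply_symm_apply y
  by_cases hsing : ∀ x x' : L, x = x'
  · refine ⟨m₀, m₀, univ, univ, isOpen_univ, isOpen_univ, trivial, trivial, fun g _ _ => ?_⟩
    rw [hsing (g.symm y) m₀]; exact hmem
  · push_neg at hsing
    obtain ⟨p, q, hpq⟩ := hsing
    have hbt : bot < top := by
      rcases lt_or_eq_of_le (hbot.2 (mem_univ top)) with h | h
      · exact h
      · exfalso
        apply hpq
        have hp : p = bot := le_antisymm ((htop.2 (mem_univ p)).trans h.ge) (hbot.2 (mem_univ p))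
        have hq : q = bot := le_antisymm ((htop.2 (mem_univ q)).trans h.ge) (hbot.2 (mem_univ q))
        rw [hp, hq]
    by_cases hB : IsBot m₀
    · -- m₀ is the bottom; y is extreme
      have hyext : IsBot y ∨ IsTop y := hg₀m₀ ▸ extreme_map g₀ (Or.inl hB)
      refine ⟨top, top, {y}ᶜ, {y}ᶜ, isOpen_compl_singleton, isOpen_compl_singleton, ?_, ?_,
        fun g hg _ => ?_⟩
      · intro hc
        rw [mem_singleton_iff] at hc
        have htm : top = m₀ := g₀.injective (hc.trans hg₀m₀.symm)
        have h2 : m₀ ≤ bot := hB bot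
        rw [← htm] at h2
        exact absurd h2 (not_le.2 hbt)
      · intro hc
        rw [mem_singleton_iff] at hc
        have htm : top = m₀ := g₀.injective (hc.trans hg₀m₀.symm)
        have h2 : m₀ ≤ bot := hB bot
        rw [← htm] at h2
        exact absurd h2 (not_le.2 hbt)
      · -- g.symm y is extreme and ≠ top, hence = m₀
        have hyext' : IsBot (g.symm y) ∨ IsTop (g.symm y) := extreme_map g.symm hyext
        have hne : g.symm y ≠ top := fun hc =>
          hg (mem_singleton_iff.2 (by rw [← hc, g.apply_symm_apply]))
        rcases hyext' with h | h
        · have : g.symm y = m₀ := le_antisymm (h m₀) (hB _)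
          rwa [this]
        · exact absurd (le_antisymm (htop.2 (mem_univ _)) (h top)) hne
    · by_cases hT : IsTop m₀
      · have hyext : IsBot y ∨ IsTop y := hg₀m₀ ▸ extreme_map g₀ (Or.inr hT)
        refine ⟨bot, bot, {y}ᶜ, {y}ᶜ, isOpen_compl_singleton, isOpen_compl_singleton, ?_, ?_,
          fun g hg _ => ?_⟩
        · intro hc
          rw [mem_singleton_iff] at hc
          have hbm : bot = m₀ := g₀.injective (hc.trans hg₀m₀.symm)
          have h2 : top ≤ m₀ := hT top
          rw [← hbm] at h2
          exact absurd h2 (not_le.2 hbt)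
        · intro hc
          rw [mem_singleton_iff] at hc
          have hbm : bot = m₀ := g₀.injective (hc.trans hg₀m₀.symm)
          have h2 : top ≤ m₀ := hT top
          rw [← hbm] at h2
          exact absurd h2 (not_le.2 hbt)
        · have hyext' : IsBot (g.symm y) ∨ IsTop (g.symm y) := extreme_map g.symm hyext
          have hne : g.symm y ≠ bot := fun hc =>
            hg (mem_singleton_iff.2 (by rw [← hc, g.apply_symm_apply]))
          rcases hyext' with h | h
          · exact absurd (le_antisymm (h bot) (hbot.2 (mem_univ _))) hne
          · have : g.symm y = m₀ := le_antisymm (hT _) (h m₀)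
            rwa [this]
      · -- interior case
        obtain ⟨a, b, hab, hnh, hsub⟩ := exists_Icc_mem_subset_of_mem_nhds (hV.mem_nhds hmem)
        have hlt_a : a < m₀ := by
          rcases lt_or_eq_of_le hab.1 with h | h
          · exact h
          · exfalso
            have : ∃ x, x < m₀ := by
              by_contra hc; push_neg at hc; exact hB fun z => hc z
            haveI : NeBot (𝓝[<] m₀) := nhdsWithin_Iio_self_neBot' this
            have hmem' : Icc a b ∈ 𝓝[<] m₀ := nhdsWithin_le_nhds hnh
            obtain ⟨x, hx1, hx2⟩ := Filter.nonempty_of_mem (Filter.inter_mem hmem' self_mem_nhdsWithin)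
            exact absurd hx1.1 (not_le.2 (h ▸ hx2))
        have hlt_b : m₀ < b := by
          rcases lt_or_eq_of_le hab.2 with h | h
          · exact h
          · exfalso
            have : ∃ x, m₀ < x := by
              by_contra hc; push_neg at hc; exact hT fun z => hc z
            haveI : NeBot (𝓝[>] m₀) := nhdsGT_neBot_of_exists_gt this
            have hmem' : Icc a b ∈ 𝓝[>] m₀ := nhdsWithin_le_nhds hnh
            obtain ⟨x, hx1, hx2⟩ := Filter.nonempty_of_mem (Filter.inter_mem hmem' self_mem_nhdsWithin)
            exact absurd hx1.2 (not_le.2 (h ▸ hx2))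
        rcases mono_or_anti g₀ with m | m
        · refine ⟨a, b, Iio y, Ioi y, isOpen_Iio, isOpen_Ioi, ?_, ?_, fun g hga hgb => ?_⟩
          · exact hg₀m₀ ▸ m hlt_a
          · exact hg₀m₀ ▸ m hlt_b
          · exact hsub (symm_mem_Icc g (hlt_a.le.trans hlt_b.le) (Or.inl ⟨hga, hgb⟩))
        · refine ⟨a, b, Ioi y, Iio y, isOpen_Ioi, isOpen_Iio, ?_, ?_, fun g hga hgb => ?_⟩
          · exact hg₀m₀ ▸ m hlt_a
          · exact hg₀m₀ ▸ m hlt_b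
          · exact hsub (symm_mem_Icc g (hlt_a.le.trans hlt_b.le) (Or.inr ⟨hgb, hga⟩))
end Llevel

section Xlevel
variable {L : Type u} [LinearOrder L] [TopologicalSpace L] [OrderTopology L]
  [CompactSpace L] [ConnectedSpace L]

theorem eval_cont {X : Type u} [TopologicalSpace X] (x : X) :
    Continuous fun f : X ≃ₜ X => f x :=
  (continuous_apply x).comp continuous_induced_dom

theorem basic_open {X : Type u} [TopologicalSpace X] (x : X) {W : Set X} (hW : IsOpen W) :
    IsOpen {f : X ≃ₜ X | f x ∈ W} :=
  hW.preimage (eval_cont x)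

/-- Component decomposition of a homeomorphism of `L × Bool`. -/
theorem decomp (f : (L × Bool) ≃ₜ (L × Bool)) (i : Bool) :
    ∃ (j : Bool) (g : L ≃ₜ L), ∀ l : L, f (l, i) = (g l, j) := by
  obtain ⟨l₀⟩ : Nonempty L := inferInstance
  have hc1 : Continuous fun l : L => f (l, i) :=
    f.continuous.comp (continuous_id.prodMk continuous_const)
  have hc1' : Continuous fun m : L => f.symm (m, (f (l₀, i)).2) :=
    f.symm.continuous.comp (continuous_id.prodMk continuous_const)
  set j := (f (l₀, i)).2 with hj
  have hconst : ∀ l : L, (f (l, i)).2 = j := fun l =>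
    PreconnectedSpace.constant inferInstance (continuous_snd.comp hc1) (x := l) (y := l₀)
  have hfull : ∀ l : L, f (l, i) = ((f (l, i)).1, j) := fun l =>
    Prod.ext rfl (hconst l)
  have hconst' : ∀ m : L, (f.symm (m, j)).2 = i := by
    intro m
    have h0 : (f.symm ((f (l₀, i)).1, j)).2 = i := by
      rw [← hfull l₀, f.symm_apply_apply]
    calc (f.symm (m, j)).2 = (f.symm ((f (l₀, i)).1, j)).2 :=
          PreconnectedSpace.constant inferInstance (continuous_snd.comp hc1')
      _ = i := h0
  have hfull' : ∀ m : L, f.symm (m, j) = ((f.symm (m, j)).1, i) := fun m =>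
    Prod.ext rfl (hconst' m)
  have hli : Function.LeftInverse (fun m => (f.symm (m, j)).1) (fun l => (f (l, i)).1) := by
    intro l
    have : f.symm ((f (l, i)).1, j) = (l, i) := by rw [← hfull l, f.symm_apply_apply]
    simp only [this]
  have hri : Function.RightInverse (fun m => (f.symm (m, j)).1) (fun l => (f (l, i)).1) := by
    intro m
    have : f ((f.symm (m, j)).1, i) = (m, j) := by rw [← hfull' m, f.apply_symm_apply]
    simp only [this]
  exact ⟨j, ⟨⟨fun l => (f (l, i)).1, fun m => (f.symm (m, j)).1, hli, hri⟩,
    continuous_fst.comp hc1, continuous_fst.comp hc1'⟩, fun l => hfull l⟩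

theorem Xeval (f₀ : (L × Bool) ≃ₜ (L × Bool)) (x₀ : L × Bool) (V : Set (L × Bool))
    (hV : IsOpen V) (hmem : f₀ x₀ ∈ V) :
    ∃ U ∈ 𝓝 x₀, ∃ N ∈ 𝓝 f₀, ∀ f ∈ N, ∀ x ∈ U, f x ∈ V := by
  obtain ⟨l₀, i₀⟩ := x₀
  obtain ⟨j₀, g₀, hg₀⟩ := decomp f₀ i₀
  set V' : Set L := {m | (m, j₀) ∈ V} with hV'
  have hV'open : IsOpen V' := hV.preimage (continuous_id.prodMk continuous_const)
  have hmem' : g₀ l₀ ∈ V' := by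
    show (g₀ l₀, j₀) ∈ V
    rw [← hg₀ l₀]; exact hmem
  obtain ⟨a, b, W, hWopen, hga, hgb, hint, hcond⟩ := fwd_lemma g₀ l₀ V' hV'open hmem'
  refine ⟨interior (Icc a b) ×ˢ {i₀}, ?_, 
    {f | f (a, i₀) ∈ W ×ˢ {j₀}} ∩ {f | f (b, i₀) ∈ W ×ˢ {j₀}}, ?_, ?_⟩
  · exact prod_mem_nhds (isOpen_interior.mem_nhds hint) (by simp)
  · refine ((basic_open _ (hWopen.prod ?_)).inter (basic_open _ (hWopen.prod ?_))).mem_nhds ?_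
    · exact isOpen_discrete _
    · exact isOpen_discrete _
    · constructor
      · show f₀ (a, i₀) ∈ W ×ˢ {j₀}
        rw [hg₀ a]; exact ⟨hga, rfl⟩
      · show f₀ (b, i₀) ∈ W ×ˢ {j₀}
        rw [hg₀ b]; exact ⟨hgb, rfl⟩
  · rintro f ⟨hfa, hfb⟩ ⟨l, i⟩ ⟨hl, hi⟩
    simp only [Set.mem_setOf_eq] at hfa hfb
    have hi : i = i₀ := hi
    subst hi
    obtain ⟨j, g, hg⟩ := decomp f i
    have hja : f (a, i) = (g a, j) := hg a
    rw [hja] at hfa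
    have hj : j = j₀ := hfa.2
    subst hj
    have hjb : f (b, i) = (g b, j) := hg b
    rw [hjb] at hfb
    have : g l ∈ V' := hcond g hfa.1 hfb.1 l (interior_subset hl)
    rw [hg l]
    exact this

theorem Xinv (f₀ : (L × Bool) ≃ₜ (L × Bool)) (x₀ : L × Bool) (V : Set (L × Bool))
    (hV : IsOpen V) (hmem : f₀.symm x₀ ∈ V) :
    {f : (L × Bool) ≃ₜ (L × Bool) | f.symm x₀ ∈ V} ∈ 𝓝 f₀ := by
  obtain ⟨y, j₀⟩ := x₀
  set i₀ := (f₀.symm (y, j₀)).2 with hi₀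
  obtain ⟨j1, g₀, hg₀⟩ := decomp f₀ i₀
  have hkey : f₀ ((f₀.symm (y, j₀)).1, i₀) = (y, j₀) := by
    rw [← Prod.mk.eta (p := f₀.symm (y, j₀)), f₀.apply_symm_apply]
  have hj : j1 = j₀ := by
    have := hg₀ (f₀.symm (y, j₀)).1
    rw [hkey] at this
    exact (congrArg Prod.snd this).symm
  rw [hj] at hg₀
  have hg₀m : g₀ (f₀.symm (y, j₀)).1 = y := by
    have := hg₀ (f₀.symm (y, j₀)).1
    rw [hkey] at this
    exact (congrArg Prod.fst this).symm
  have hsymm : g₀.symm y = (f₀.symm (y, j₀)).1 :=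
    g₀.injective (by rw [g₀.apply_symm_apply, hg₀m])
  set V' : Set L := {m | (m, i₀) ∈ V} with hV'
  have hV'open : IsOpen V' := hV.preimage (continuous_id.prodMk continuous_const)
  have hmem' : g₀.symm y ∈ V' := by
    show (g₀.symm y, i₀) ∈ V
    rw [hsymm, Prod.mk.eta]
    exact hmem
  obtain ⟨a, b, Wa, Wb, hWaopen, hWbopen, hga, hgb, hcond⟩ := inv_lemma g₀ y V' hV'open hmem'
  have hN : ({f | f (a, i₀) ∈ Wa ×ˢ {j₀}} ∩ {f | f (b, i₀) ∈ Wb ×ˢ {j₀}} :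
      Set ((L × Bool) ≃ₜ (L × Bool))) ∈ 𝓝 f₀ := by
    refine ((basic_open _ (hWaopen.prod (isOpen_discrete _))).inter
      (basic_open _ (hWbopen.prod (isOpen_discrete _)))).mem_nhds ?_
    constructor
    · show f₀ (a, i₀) ∈ Wa ×ˢ {j₀}
      rw [hg₀ a]; exact ⟨hga, rfl⟩
    · show f₀ (b, i₀) ∈ Wb ×ˢ {j₀}
      rw [hg₀ b]; exact ⟨hgb, rfl⟩
  refine Filter.mem_of_superset hN ?_
  rintro f ⟨hfa, hfb⟩
  simp only [Set.mem_setOf_eq] at hfa hfb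
  obtain ⟨j1, g, hg⟩ := decomp f i₀
  have hja : f (a, i₀) = (g a, j1) := hg a
  rw [hja] at hfa
  have hj : j1 = j₀ := hfa.2
  rw [hj] at hg
  have hjb : f (b, i₀) = (g b, j₀) := hg b
  rw [hjb] at hfb
  have hgV : g.symm y ∈ V' := hcond g hfa.1 hfb.1
  have hfsymm : f.symm (y, j₀) = (g.symm y, i₀) := by
    have : f (g.symm y, i₀) = (y, j₀) := by
      rw [hg (g.symm y), g.apply_symm_apply]
    rw [← this, f.symm_apply_apply]
  show f.symm (y, j₀) ∈ V
  rw [hfsymm]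
  exact hgV

end Xlevel


/-- Hom_p(L × {0,1}) is a topological group for a compact connected LOTS L. -/
theorem stmt_10 {L : Type u} [LinearOrder L] [TopologicalSpace L] [OrderTopology L]
    [CompactSpace L] [ConnectedSpace L] :
    Continuous (fun p : ((L × Bool) ≃ₜ (L × Bool)) × ((L × Bool) ≃ₜ (L × Bool)) =>
        p.2.trans p.1) ∧
      Continuous (fun f : (L × Bool) ≃ₜ (L × Bool) => f.symm) := by
  constructor
  · apply continuous_induced_rng.2
    apply continuous_pi
    intro x
    rw [continuous_iff_continuousAt]
    rintro ⟨f₀, g₀⟩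
    rw [ContinuousAt, tendsto_nhds]
    intro V hV hmem
    have hmem' : f₀ (g₀ x) ∈ V := hmem
    obtain ⟨U, hU, N, hN, hprop⟩ := Xeval f₀ (g₀ x) V hV hmem'
    have h2 : {g : (L × Bool) ≃ₜ (L × Bool) | g x ∈ U} ∈ 𝓝 g₀ :=
      (eval_cont x).continuousAt.preimage_mem_nhds hU
    rw [nhds_prod_eq]
    refine Filter.mem_of_superset (Filter.prod_mem_prod hN h2) ?_
    rintro ⟨f, g⟩ ⟨hf, hg⟩
    exact hprop f hf (g x) hg
  · apply continuous_induced_rng.2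
    apply continuous_pi
    intro x
    rw [continuous_iff_continuousAt]
    intro f₀
    rw [ContinuousAt, tendsto_nhds]
    intro V hV hmem
    exact Xinv f₀ x V hV hmem
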